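/- arXiv:1610.00168 — 2 statements merged into one kernel-verified Lean document; each statement's English description precedes it below -/
import Mathlib

section
/- Let L ⊂ ℤ^{d+1} be finite with 0 ∈ L, l : L → ℝ₊, Φ(k) = min{l(λ) : λ ∈ L, ‖λ‖₀ ≤ k}, and let k^opt be the minimal ‖λ‖₀ among minimizers of l over L, with λ^opt a corresponding minimizer. If k^opt ≥ 1, then there exists an integer z with 1 ≤ z ≤ k^opt such that whenever 0 < C₀ < (1/z)[Φ(k^opt − z) − Φ(k^opt)], the vector λ^opt minimizes λ ↦ l(λ) + C₀‖λ‖₀ over L. -/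
open Finset

/-- The number of nonzero coefficients. -/
def norm0 {d : ℕ} (w : Fin (d + 1) → ℤ) : ℕ := (Finset.univ.filter (fun j => w j ≠ 0)).card

/-- A sufficiently small trade-off parameter `C0` does not influence accuracy:
the sparsest loss minimizer minimizes the regularized objective. -/
theorem small_C0_preserves_accuracy (d : ℕ) (L : Finset (Fin (d + 1) → ℤ))
    (h0 : (0 : Fin (d + 1) → ℤ) ∈ L)
    (l : (Fin (d + 1) → ℤ) → ℝ) (hl : ∀ w ∈ L, 0 ≤ l w)
    (Φ : ℕ → ℝ) (hΦ : ∀ k, IsLeast {v | ∃ w ∈ L, norm0 w ≤ k ∧ v = l w} (Φ k))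
    (lamopt : Fin (d + 1) → ℤ) (hmem : lamopt ∈ L) (hglobal : ∀ u ∈ L, l lamopt ≤ l u)
    (kopt : ℕ) (hk : kopt = norm0 lamopt)
    (hminimal : ∀ w ∈ L, (∀ u ∈ L, l w ≤ l u) → kopt ≤ norm0 w)
    (hk1 : 1 ≤ kopt) :
    ∃ z : ℕ, 1 ≤ z ∧ z ≤ kopt ∧ ∀ C0 : ℝ, 0 < C0 →
      C0 < (1 / (z : ℝ)) * (Φ (kopt - z) - Φ kopt) →
      ∀ w ∈ L, l lamopt + C0 * norm0 lamopt ≤ l w + C0 * norm0 w := by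
  obtain ⟨z, hz, hzmin⟩ := Finset.exists_min_image (Finset.Icc 1 kopt)
    (fun z => (Φ (kopt - z) - Φ kopt) / z) ⟨kopt, by simp [hk1]⟩
  obtain ⟨hz1, hzk⟩ := Finset.mem_Icc.mp hz
  refine ⟨z, hz1, hzk, ?_⟩
  intro C0 hC0 hC0lt w hw
  have hΦk : Φ kopt = l lamopt := by
    obtain ⟨hle, hlb⟩ := hΦ kopt
    obtain ⟨w', hw', _, hv⟩ := hle
    have h1 : Φ kopt ≤ l lamopt := hlb ⟨lamopt, hmem, by omega, rfl⟩
    have h2 : l lamopt ≤ Φ kopt := hv ▸ hglobal w' hw'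
    linarith
  have hzpos : (0:ℝ) < z := by exact_mod_cast hz1
  by_cases hcase : kopt ≤ norm0 w
  · have h1 : l lamopt ≤ l w := hglobal w hw
    have h2 : (kopt:ℝ) ≤ norm0 w := by exact_mod_cast hcase
    have h3 : (norm0 lamopt : ℝ) = kopt := by exact_mod_cast congrArg Nat.cast hk.symm
    nlinarith
  · push_neg at hcase
    set g := kopt - norm0 w with hg
    have hg1 : 1 ≤ g := by omega
    have hgk : g ≤ kopt := by omega
    have hΦg : Φ (kopt - g) ≤ l w := (hΦ (kopt - g)).2 ⟨w, hw, by omega, rfl⟩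
    have hmin := hzmin g (Finset.mem_Icc.mpr ⟨hg1, hgk⟩)
    have hgpos : (0:ℝ) < g := by exact_mod_cast hg1
    have hC0z : C0 < (Φ (kopt - z) - Φ kopt) / z := by
      rw [div_eq_inv_mul, ← one_div]; exact hC0lt
    have hC0g : C0 * g < Φ (kopt - g) - Φ kopt := by
      have := lt_of_lt_of_le hC0z hmin
      calc C0 * g < ((Φ (kopt - g) - Φ kopt) / g) * g := by
            exact mul_lt_mul_of_pos_right this hgpos
        _ = Φ (kopt - g) - Φ kopt := div_mul_cancel₀ _ (ne_of_gt hgpos)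
    have hcast : (g:ℝ) = (kopt:ℝ) - norm0 w := by
      rw [hg]; push_cast [Nat.cast_sub (le_of_lt hcase)]; ring
    have h3 : (norm0 lamopt : ℝ) = kopt := by exact_mod_cast congrArg Nat.cast hk.symm
    nlinarith
end

section
/- If the chained-updates procedure is applied with update rules V^min ← max(V^min, L^min + C₀R^min), V^max ← min(V^max, L^max + C₀R^max), L^min ← max(L^min, V^min − C₀R^max), L^max ← min(L^max, V^max − C₀R^min), R^max ← min(R^max, ⌊(V^max − L^min)/C₀⌋), and initially V^min ≤ V(λ*) ≤ V^max, L^min ≤ l(λ*) ≤ L^max, R^min ≤ ‖λ*‖₀ ≤ R^max, then after any finite sequence of these updates the invariants V^min ≤ V(λ*) ≤ V^max, L^min ≤ l(λ*) ≤ L^max, and R^min ≤ ‖λ*‖₀ ≤ R^max still hold, where V(λ*) = l(λ*) + C₀‖λ*‖₀ and C₀ > 0. -/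
/-- State of bounds maintained by the ChainedUpdates procedure. -/
structure CUState where
  Vmin : ℝ
  Vmax : ℝ
  Lmin : ℝ
  Lmax : ℝ
  Rmin : ℕ
  Rmax : ℕ

/-- One application of a chained-updates rule. -/
inductive CUStep (C0 : ℝ) : CUState → CUState → Prop
  | vmin (s : CUState) : CUStep C0 s { s with Vmin := max s.Vmin (s.Lmin + C0 * s.Rmin) }
  | vmax (s : CUState) : CUStep C0 s { s with Vmax := min s.Vmax (s.Lmax + C0 * s.Rmax) }
  | lmin (s : CUState) : CUStep C0 s { s with Lmin := max s.Lmin (s.Vmin - C0 * s.Rmax) }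
  | lmax (s : CUState) : CUStep C0 s { s with Lmax := min s.Lmax (s.Vmax - C0 * s.Rmin) }
  | rmax (s : CUState) :
      CUStep C0 s { s with Rmax := min s.Rmax (⌊(s.Vmax - s.Lmin) / C0⌋.toNat) }

/-- Validity of the bounds with respect to the (fixed) optimal loss `lstar` and
optimal sparsity `R`, with objective `V(λ*) = lstar + C0 * R`. -/
def CUValid (C0 lstar : ℝ) (R : ℕ) (s : CUState) : Prop :=
  s.Vmin ≤ lstar + C0 * R ∧ lstar + C0 * R ≤ s.Vmax ∧
  s.Lmin ≤ lstar ∧ lstar ≤ s.Lmax ∧ s.Rmin ≤ R ∧ R ≤ s.Rmax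

lemma CUStep.preserves (C0 lstar : ℝ) (R : ℕ) (hC0 : 0 < C0)
    (s t : CUState) (hst : CUStep C0 s t) (h : CUValid C0 lstar R s) :
    CUValid C0 lstar R t := by
  obtain ⟨h1, h2, h3, h4, h5, h6⟩ := h
  have hmul : C0 * (s.Rmin : ℝ) ≤ C0 * R :=
    mul_le_mul_of_nonneg_left (by exact_mod_cast h5) hC0.le
  have hmul' : C0 * (R : ℝ) ≤ C0 * s.Rmax :=
    mul_le_mul_of_nonneg_left (by exact_mod_cast h6) hC0.le
  cases hst with
  | vmin => exact ⟨max_le h1 (by linarith), h2, h3, h4, h5, h6⟩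
  | vmax => exact ⟨h1, le_min h2 (by linarith), h3, h4, h5, h6⟩
  | lmin => exact ⟨h1, h2, max_le h3 (by linarith), h4, h5, h6⟩
  | lmax => exact ⟨h1, h2, h3, le_min h4 (by linarith), h5, h6⟩
  | rmax =>
      refine ⟨h1, h2, h3, h4, h5, le_min h6 ?_⟩
      have hR : (R : ℝ) ≤ (s.Vmax - s.Lmin) / C0 := by
        rw [le_div_iff₀ hC0]
        linarith [mul_comm C0 (R : ℝ)]
      have : (R : ℤ) ≤ ⌊(s.Vmax - s.Lmin) / C0⌋ := by
        exact_mod_cast Int.le_floor.mpr (by exact_mod_cast hR)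
      omega


/-- Soundness of ChainedUpdates: any finite sequence of update rules preserves
validity of all bounds. -/
theorem chained_updates_sound (C0 lstar : ℝ) (R : ℕ) (hC0 : 0 < C0) (hl : 0 ≤ lstar)
    (s s' : CUState) (h : Relation.ReflTransGen (CUStep C0) s s')
    (hinit : CUValid C0 lstar R s) : CUValid C0 lstar R s' := by
  induction h with
  | refl => exact hinit
  | tail _ hstep ih => exact hstep.preserves C0 lstar R hC0 _ _ ih
end
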